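/- Let n ∈ ℕ, n ≥ 1, let h̄ ∈ ℕ, h̄ ≥ 1, let X ∈ ℝ^{n×n} be symmetric positive definite and Y ∈ ℝ^{n×n} symmetric positive semidefinite. Then for every sampling sequence t : ℕ → ℕ with sampling intervals h_k ≤ h̄, every signal y : ℕ → ℝ^n with e = Δy, and every T ∈ ℕ, Σ_{s=0}^{T} ( y(s)ᵀ(λmax(E_{h̄})·X + Y)y(s) + 2·y(s)ᵀ Y e(s) − e(s)ᵀ X e(s) ) ≥ 0. (The delay operator satisfies the hard static IQC with multiplier Π = [[λmax(E_{h̄})X + Y, Y],[Y, −X]].) -/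

import Mathlib

open Matrix Finset

/-- The `h × h` matrix with entries `min i j` (zero-based indices). -/
noncomputable def Emat (h : ℕ) : Matrix (Fin h) (Fin h) ℝ :=
  fun i j => (min (i : ℕ) (j : ℕ) : ℝ)

lemma Emat_isHermitian (h : ℕ) : (Emat h).IsHermitian := by
  ext i j
  simp [Emat, Matrix.conjTranspose_apply, min_comm]

/-- The largest eigenvalue of `Emat h`. -/
noncomputable def lamMax (h : ℕ) : ℝ := ⨆ i, (Emat_isHermitian h).eigenvalues i

lemma dotProduct_Emat_le (h : ℕ) (w : Fin h → ℝ) :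
    w ⬝ᵥ (Emat h *ᵥ w) ≤ lamMax h * (w ⬝ᵥ w) := by
  classical
  have hA := Emat_isHermitian h
  set U : Matrix (Fin h) (Fin h) ℝ := (hA.eigenvectorUnitary : Matrix (Fin h) (Fin h) ℝ) with hU
  have hstar : star U = Uᵀ := by
    rw [Matrix.star_eq_conjTranspose]; ext i j; simp [Matrix.conjTranspose_apply]
  set z : Fin h → ℝ := (star U) *ᵥ w with hz
  have hzz : z = w ᵥ* U := by rw [hz, hstar, Matrix.mulVec_transpose]
  have hUU : U * star U = 1 := Matrix.mem_unitaryGroup_iff.mp hA.eigenvectorUnitary.2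
  have hzw : z ⬝ᵥ z = w ⬝ᵥ w := by
    calc z ⬝ᵥ z = (w ᵥ* U) ⬝ᵥ (star U *ᵥ w) := by rw [← hzz, ← hz]
    _ = w ⬝ᵥ (U *ᵥ (star U *ᵥ w)) := by rw [← Matrix.dotProduct_mulVec]
    _ = w ⬝ᵥ ((U * star U) *ᵥ w) := by rw [Matrix.mulVec_mulVec]
    _ = w ⬝ᵥ w := by rw [hUU, Matrix.one_mulVec]
  have hmain : w ⬝ᵥ (Emat h *ᵥ w) = ∑ i, hA.eigenvalues i * (z i)^2 := by
    conv_lhs => rw [hA.spectral_theorem, Unitary.conjStarAlgAut_apply]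
    rw [← Matrix.mulVec_mulVec, ← Matrix.mulVec_mulVec, Matrix.dotProduct_mulVec, ← hzz]
    rw [dotProduct]
    refine Finset.sum_congr rfl fun i _ => ?_
    rw [Matrix.mulVec_diagonal]
    simp [RCLike.ofReal]
    ring
  have hle : ∀ i, hA.eigenvalues i ≤ lamMax h := fun i =>
    le_ciSup (Finite.bddAbove_range _) i
  rw [hmain, hzw.symm]
  calc ∑ i, hA.eigenvalues i * (z i)^2 ≤ ∑ i, lamMax h * (z i)^2 :=
        Finset.sum_le_sum fun i _ => mul_le_mul_of_nonneg_right (hle i) (sq_nonneg _)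
  _ = lamMax h * (z ⬝ᵥ z) := by rw [dotProduct, Finset.mul_sum]; exact Finset.sum_congr rfl fun i _ => by ring

lemma key_scalar (hbar h : ℕ) (hh : h ≤ hbar) (a : ℕ → ℝ) :
    ∑ j ∈ range h, (∑ i ∈ range j, a i)^2 ≤ lamMax hbar * ∑ j ∈ range h, (a j)^2 := by
  classical
  set b : ℕ → ℝ := fun k => if k < h then a (h - 1 - k) else 0 with hb
  set w : Fin hbar → ℝ := fun k => b (k : ℕ) with hw
  set E' : ℕ → ℕ → ℝ := fun k k' => ((min k k' : ℕ) : ℝ) with hE'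
  have hE : ∀ i j : Fin hbar, Emat hbar i j = E' (i : ℕ) (j : ℕ) := by
    intro i j; simp [Emat, hE', Nat.cast_min]
  have hdot : w ⬝ᵥ w = ∑ j ∈ range h, (a j)^2 := by
    have : w ⬝ᵥ w = ∑ k ∈ range hbar, b k * b k := by
      rw [dotProduct]
      exact Fin.sum_univ_eq_sum_range (fun k => b k * b k) hbar
    rw [this, ← Finset.sum_subset (Finset.range_subset_range.2 hh)
      (by intro k _ hk; simp only [Finset.mem_range, not_lt] at hk; simp [hb, Nat.not_lt.2 hk])]
    rw [show ∑ k ∈ range h, b k * b k = ∑ k ∈ range h, (a (h-1-k))^2 from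
      Finset.sum_congr rfl fun k hk => by
        simp only [Finset.mem_range] at hk; simp [hb, hk]; ring]
    exact Finset.sum_range_reflect (fun j => (a j)^2) h
  have hmin : ∀ k k' : ℕ, k < hbar →
      E' k k' = ∑ j ∈ range hbar, if j < min k k' then (1:ℝ) else 0 := by
    intro k k' hk
    rw [Finset.sum_boole]
    have : Finset.filter (fun j => j < min k k') (Finset.range hbar) = Finset.range (min k k') := by
      ext j; simp; omega
    rw [this, Finset.card_range]
  have hg : ∀ j : ℕ, ∑ k ∈ range hbar, (if j < k then b k else 0)
      = ∑ i ∈ range (h - 1 - j), a i := by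
    intro j
    rw [← Finset.sum_filter]
    rw [show Finset.filter (fun k => j < k) (Finset.range hbar) = Finset.Ico (j+1) hbar by
      ext k; simp; omega]
    rw [show ∑ k ∈ Finset.Ico (j+1) hbar, b k
        = ∑ k ∈ Finset.filter (fun k => k < h) (Finset.Ico (j+1) hbar), a (h-1-k) by
      rw [Finset.sum_filter]]
    rw [show Finset.filter (fun k => k < h) (Finset.Ico (j+1) hbar) = Finset.Ico (j+1) h by
      ext k; simp; omega]
    rw [Finset.sum_Ico_eq_sum_range]
    rw [show h - (j+1) = h - 1 - j from by omega]
    rw [show ∑ i ∈ range (h-1-j), a (h - 1 - (j + 1 + i))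
        = ∑ i ∈ range (h-1-j), a ((h-1-j) - 1 - i) from
      Finset.sum_congr rfl fun i hi => by
        simp only [Finset.mem_range] at hi; congr 1; omega]
    exact Finset.sum_range_reflect (fun i => a i) (h-1-j)
  have hmv : ∀ k : Fin hbar, (Emat hbar *ᵥ w) k
      = ∑ k' ∈ range hbar, E' (k : ℕ) k' * b k' := by
    intro k
    rw [Matrix.mulVec, dotProduct]
    rw [Finset.sum_congr rfl fun (k' : Fin hbar) _ => by rw [hE k k']]
    exact Fin.sum_univ_eq_sum_range (fun k' => E' (k : ℕ) k' * b k') hbar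
  have h1 : w ⬝ᵥ (Emat hbar *ᵥ w)
      = ∑ k ∈ range hbar, ∑ k' ∈ range hbar, b k * (E' k k' * b k') := by
    rw [dotProduct]
    rw [Finset.sum_congr rfl fun (k : Fin hbar) _ => by rw [hmv k, hw]]
    rw [Fin.sum_univ_eq_sum_range
      (fun k => b k * ∑ k' ∈ range hbar, E' k k' * b k') hbar]
    exact Finset.sum_congr rfl fun k _ => by rw [Finset.mul_sum]
  have h2 : ∀ k ∈ range hbar, ∀ k' ∈ range hbar,
      b k * (E' k k' * b k')
        = ∑ j ∈ range hbar, (if j < k then b k else 0) * (if j < k' then b k' else 0) := by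
    intro k hk k' hk'
    simp only [Finset.mem_range] at hk hk'
    rw [hmin k k' hk]
    rw [Finset.sum_mul, Finset.mul_sum]
    refine Finset.sum_congr rfl fun j _ => ?_
    by_cases hj1 : j < k <;> by_cases hj2 : j < k' <;>
      simp [hj1, hj2, lt_min_iff] <;> ring
  have h3 : w ⬝ᵥ (Emat hbar *ᵥ w)
      = ∑ j ∈ range hbar, (∑ k ∈ range hbar, if j < k then b k else 0)^2 := by
    rw [h1, Finset.sum_congr rfl fun k hk =>
      Finset.sum_congr rfl fun k' hk' => h2 k hk k' hk']
    rw [Finset.sum_congr rfl fun k _ => Finset.sum_comm]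
    rw [Finset.sum_comm]
    refine Finset.sum_congr rfl fun j _ => ?_
    rw [sq, Finset.sum_mul_sum]
  have h4 : w ⬝ᵥ (Emat hbar *ᵥ w) = ∑ j ∈ range h, (∑ i ∈ range j, a i)^2 := by
    rw [h3, Finset.sum_congr rfl fun j _ => by rw [hg j]]
    rw [← Finset.sum_subset (Finset.range_subset_range.2 hh)
      (by intro j _ hj; simp only [Finset.mem_range, not_lt] at hj
          rw [show h - 1 - j = 0 from by omega]; simp)]
    rw [Finset.sum_congr rfl fun j hj => by
      rw [show h - 1 - j = h - 1 - j from rfl]]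
    exact Finset.sum_range_reflect (fun j => (∑ i ∈ range j, a i)^2) h
  calc ∑ j ∈ range h, (∑ i ∈ range j, a i)^2 = w ⬝ᵥ (Emat hbar *ᵥ w) := h4.symm
  _ ≤ lamMax hbar * (w ⬝ᵥ w) := dotProduct_Emat_le hbar w
  _ = lamMax hbar * ∑ j ∈ range h, (a j)^2 := by rw [hdot]

lemma dot_symm {n : ℕ} {M : Matrix (Fin n) (Fin n) ℝ} (hM : M.IsHermitian)
    (u v : Fin n → ℝ) : u ⬝ᵥ (M *ᵥ v) = v ⬝ᵥ (M *ᵥ u) := by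
  have hMt : Mᵀ = M := by
    ext i j
    have := congrFun (congrFun hM i) j
    simpa [Matrix.conjTranspose_apply] using this
  have h2 : u ᵥ* M = M *ᵥ u := by
    nth_rewrite 1 [← hMt]
    exact Matrix.vecMul_transpose M u
  rw [Matrix.dotProduct_mulVec, h2, dotProduct_comm]

lemma key_vec {n : ℕ} (hbar h : ℕ) (hh : h ≤ hbar)
    (X : Matrix (Fin n) (Fin n) ℝ) (hX : X.PosSemidef) (v : ℕ → Fin n → ℝ) :
    ∑ j ∈ range h, ((∑ i ∈ range j, v i) ⬝ᵥ (X *ᵥ (∑ i ∈ range j, v i)))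
      ≤ (lamMax hbar) * ∑ j ∈ range h, (v j ⬝ᵥ (X *ᵥ v j)) := by
  obtain ⟨B, rfl⟩ : ∃ B : Matrix (Fin n) (Fin n) ℝ, X = Bᴴ * B := by
    open scoped MatrixOrder in
    obtain ⟨B, hB⟩ := CStarAlgebra.nonneg_iff_eq_star_mul_self.mp hX.nonneg
    exact ⟨B, hB⟩
  have key : ∀ u : Fin n → ℝ, u ⬝ᵥ ((Bᴴ * B) *ᵥ u) = ∑ c, ((B *ᵥ u) c)^2 := by
    intro u
    rw [← Matrix.mulVec_mulVec, Matrix.dotProduct_mulVec]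
    have : u ᵥ* Bᴴ = B *ᵥ u := by
      have hBt : Bᴴ = Bᵀ := by ext i j; simp [Matrix.conjTranspose_apply]
      rw [hBt, Matrix.vecMul_transpose]
    rw [this, dotProduct]
    exact Finset.sum_congr rfl fun c _ => (sq ((B *ᵥ u) c)).symm
  have hlin : ∀ (j : ℕ), B *ᵥ (∑ i ∈ range j, v i) = ∑ i ∈ range j, B *ᵥ v i := by
    intro j
    induction j with
    | zero => simp
    | succ j ih => rw [Finset.sum_range_succ, Finset.sum_range_succ, Matrix.mulVec_add, ih]
  calc ∑ j ∈ range h, ((∑ i ∈ range j, v i) ⬝ᵥ ((Bᴴ * B) *ᵥ (∑ i ∈ range j, v i)))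
      = ∑ j ∈ range h, ∑ c, ((∑ i ∈ range j, (B *ᵥ v i) c))^2 := by
        refine Finset.sum_congr rfl fun j _ => ?_
        rw [key, hlin]
        refine Finset.sum_congr rfl fun c _ => ?_
        rw [Finset.sum_apply]
    _ = ∑ c, ∑ j ∈ range h, ((∑ i ∈ range j, (B *ᵥ v i) c))^2 := Finset.sum_comm
    _ ≤ ∑ c, (lamMax hbar) * ∑ j ∈ range h, ((B *ᵥ v j) c)^2 := by
        refine Finset.sum_le_sum fun c _ => key_scalar hbar h hh (fun i => (B *ᵥ v i) c)
    _ = (lamMax hbar) * ∑ j ∈ range h, (v j ⬝ᵥ ((Bᴴ * B) *ᵥ v j)) := by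
        rw [← Finset.mul_sum, Finset.sum_comm]
        congr 1
        exact Finset.sum_congr rfl fun j _ => (key (v j)).symm

lemma Ypart {n : ℕ} (h : ℕ) (Y : Matrix (Fin n) (Fin n) ℝ) (hY : Y.PosSemidef)
    (v : ℕ → Fin n → ℝ) :
    0 ≤ ∑ j ∈ range h, (v j ⬝ᵥ (Y *ᵥ v j)
        + 2 * (v j ⬝ᵥ (Y *ᵥ (∑ i ∈ range j, v i)))) := by
  set f : ℕ → ℝ := fun j => (∑ i ∈ range j, v i) ⬝ᵥ (Y *ᵥ (∑ i ∈ range j, v i)) with hf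
  have hstep : ∀ j, v j ⬝ᵥ (Y *ᵥ v j) + 2 * (v j ⬝ᵥ (Y *ᵥ (∑ i ∈ range j, v i)))
      = f (j+1) - f j := by
    intro j
    rw [hf]
    simp only [Finset.sum_range_succ]
    rw [Matrix.mulVec_add, dotProduct_add, add_dotProduct,
      add_dotProduct]
    rw [dot_symm hY.1 (∑ i ∈ range j, v i) (v j)]
    ring
  rw [Finset.sum_congr rfl fun j _ => hstep j, Finset.sum_range_sub f]
  have h0 : f 0 = 0 := by simp [hf]
  rw [h0, sub_zero, hf]
  have := hY.dotProduct_mulVec_nonneg (∑ i ∈ range h, v i)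
  simpa using this

/-- The delay operator satisfies the hard static IQC with the combined multiplier
`Π = [[λmax(E_h̄)X + Y, Y], [Y, −X]]`, for any `X ≻ 0` and `Y ⪰ 0`. -/
theorem delay_operator_combined_IQC
    (n : ℕ) (hn : 1 ≤ n) (hbar : ℕ) (hhbar : 1 ≤ hbar)
    (X Y : Matrix (Fin n) (Fin n) ℝ) (hX : X.PosDef) (hY : Y.PosSemidef)
    (t : ℕ → ℕ) (ht : StrictMono t) (ht0 : t 0 = 0)
    (hint : ∀ k : ℕ, t (k + 1) - t k ≤ hbar)
    (y e : ℕ → Fin n → ℝ)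
    (he : ∀ k s : ℕ, t k ≤ s → s < t (k + 1) →
      e s = ∑ i ∈ Finset.Ico (t k) s, y i) :
    ∀ T : ℕ, 0 ≤ ∑ s ∈ Finset.range (T + 1),
      (y s ⬝ᵥ ((lamMax hbar • X + Y) *ᵥ y s) + 2 * (y s ⬝ᵥ (Y *ᵥ e s))
        - e s ⬝ᵥ (X *ᵥ e s)) := by
  intro T
  set φ : ℕ → ℝ := fun s => y s ⬝ᵥ (((lamMax hbar) • X + Y) *ᵥ y s)
    + 2 * (y s ⬝ᵥ (Y *ᵥ e s)) - e s ⬝ᵥ (X *ᵥ e s) with hφ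
  have chunk : ∀ k m : ℕ, t k ≤ m → m ≤ t (k + 1) →
      0 ≤ ∑ s ∈ Finset.Ico (t k) m, φ s := by
    intro k m hkm hm
    rw [Finset.sum_Ico_eq_sum_range]
    set v : ℕ → Fin n → ℝ := fun j => y (t k + j) with hv
    have hE : ∀ j ∈ range (m - t k), e (t k + j) = ∑ i ∈ range j, v i := by
      intro j hj
      simp only [Finset.mem_range] at hj
      rw [he k (t k + j) (by omega) (by omega)]
      rw [Finset.sum_Ico_eq_sum_range]
      rw [show t k + j - t k = j from by omega]
    have hsplit : ∑ j ∈ range (m - t k), φ (t k + j)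
        = (∑ j ∈ range (m - t k), (v j ⬝ᵥ (Y *ᵥ v j)
            + 2 * (v j ⬝ᵥ (Y *ᵥ (∑ i ∈ range j, v i)))))
          + (((lamMax hbar) * ∑ j ∈ range (m - t k), (v j ⬝ᵥ (X *ᵥ v j)))
            - ∑ j ∈ range (m - t k), ((∑ i ∈ range j, v i) ⬝ᵥ (X *ᵥ (∑ i ∈ range j, v i)))) := by
      rw [Finset.mul_sum, ← Finset.sum_sub_distrib, ← Finset.sum_add_distrib]
      refine Finset.sum_congr rfl fun j hj => ?_
      rw [hφ]
      simp only []
      rw [hE j hj]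
      rw [Matrix.add_mulVec, dotProduct_add, Matrix.smul_mulVec,
        dotProduct_smul]
      simp only [hv, smul_eq_mul]
      ring
    rw [hsplit]
    have h1 := Ypart (m - t k) Y hY v
    have h2 := key_vec hbar (m - t k) (by have := hint k; omega) X hX.posSemidef v
    have h3 : (0:ℝ) ≤ ((lamMax hbar) * ∑ j ∈ range (m - t k), (v j ⬝ᵥ (X *ᵥ v j)))
        - ∑ j ∈ range (m - t k), ((∑ i ∈ range j, v i) ⬝ᵥ (X *ᵥ (∑ i ∈ range j, v i))) :=
      sub_nonneg.mpr h2
    exact add_nonneg h1 h3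
  -- main induction
  have main : ∀ K : ℕ, 0 ≤ ∑ s ∈ Finset.range (min (t K) (T + 1)), φ s := by
    intro K
    induction K with
    | zero => simp [ht0]
    | succ K ih =>
      have hmono : t K ≤ t (K + 1) := (ht (Nat.lt_succ_self K)).le
      have h12 : min (t K) (T + 1) ≤ min (t (K + 1)) (T + 1) := by omega
      rw [Finset.range_eq_Ico, ← Finset.sum_Ico_consecutive _ (Nat.zero_le _) h12]
      refine add_nonneg (by rwa [Finset.range_eq_Ico] at ih) ?_
      rcases le_or_gt (T + 1) (t K) with hc | hc
      · rw [show min (t K) (T+1) = T + 1 from by omega,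
          show min (t (K+1)) (T+1) = T + 1 from by omega]
        simp
      · rw [show min (t K) (T+1) = t K from by omega]
        exact chunk K (min (t (K + 1)) (T + 1)) (by omega) (min_le_left _ _)
  have hfin := main (T + 1)
  rw [min_eq_right (ht.le_apply)] at hfin
  exact hfin
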